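/- Let dim(·|·) be a bivariant Sylvester module rank function for a unital ring R. Then for any left R-modules M₁ ⊆ M₂ ⊆ M₃, dim(M₂|M₃) = dim(M₁|M₃) + dim(M₂/M₁|M₃/M₁). -/

import Mathlib

universe u
open scoped NNReal ENNReal

/-- A bivariant Sylvester module rank function for a unital ring `R`: to each pair of left
`R`-modules `N ⊆ M` (encoded as a submodule `N` of a module `M`) it assigns a value
`d M N ∈ ℝ≥0∞`, thought of as `dim(N|M)`, satisfying isomorphism invariance, normalization,
direct sum additivity, the two continuity conditions, and additivity. -/
structure BivariantSylvesterRank (R : Type u) [Ring R] where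
  d : ∀ (M : Type u) [AddCommGroup M] [Module R M], Submodule R M → ℝ≥0∞
  iso_invariant : ∀ (M N : Type u) [AddCommGroup M] [Module R M] [AddCommGroup N] [Module R N]
      (e : M ≃ₗ[R] N) (p : Submodule R M),
      d M p = d N (p.map (e : M →ₗ[R] N))
  d_zero : d PUnit ⊤ = 0
  d_ring : d R ⊤ = 1
  d_prod : ∀ (M N : Type u) [AddCommGroup M] [Module R M] [AddCommGroup N] [Module R N]
      (p : Submodule R M) (q : Submodule R N),
      d (M × N) (p.prod q) = d M p + d N q
  continuity_sup : ∀ (M : Type u) [AddCommGroup M] [Module R M] (p : Submodule R M),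
      d M p = ⨆ (p' : {p' : Submodule R M // p'.FG ∧ p' ≤ p}), d M p'.1
  continuity_inf : ∀ (M : Type u) [AddCommGroup M] [Module R M] (p : Submodule R M), p.FG →
      d M p = ⨅ (q : {q : Submodule R M // q.FG ∧ p ≤ q}), d q.1 (p.comap q.1.subtype)
  additivity : ∀ (M : Type u) [AddCommGroup M] [Module R M] (p : Submodule R M),
      d M ⊤ = d M p + d (M ⧸ p) ⊤

namespace Hidden

variable {R : Type u} [Ring R] (dim : BivariantSylvesterRank R)
variable {M N : Type u} [AddCommGroup M] [Module R M] [AddCommGroup N] [Module R N]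

lemma d_top_iso (e : M ≃ₗ[R] N) : dim.d M ⊤ = dim.d N ⊤ := by
  rw [dim.iso_invariant M N e ⊤, Submodule.map_top, LinearEquiv.range]

lemma d_mono {p p' : Submodule R M} (h : p ≤ p') : dim.d M p ≤ dim.d M p' := by
  rw [dim.continuity_sup M p, dim.continuity_sup M p']
  exact iSup_le fun r => le_iSup_of_le ⟨r.1, r.2.1, r.2.2.trans h⟩ le_rfl

lemma d_quot_le (p : Submodule R M) : dim.d (M ⧸ p) ⊤ ≤ dim.d M ⊤ := by
  rw [dim.additivity M p]; exact le_add_self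

/-- `Fin (n+1) → R` is linearly equivalent to `R × (Fin n → R)`. -/
def finSuccLEquiv (n : ℕ) : (Fin (n + 1) → R) ≃ₗ[R] R × (Fin n → R) where
  toFun f := (f 0, fun i => f i.succ)
  invFun p := Fin.cons p.1 p.2
  map_add' _ _ := rfl
  map_smul' _ _ := rfl
  left_inv f := by
    funext i
    refine Fin.cases ?_ (fun j => ?_) i
    · exact Fin.cons_zero _ _
    · exact Fin.cons_succ _ _ _
  right_inv p := by
    refine Prod.ext ?_ ?_ <;> simp

def punitLEquiv : (Fin 0 → R) ≃ₗ[R] PUnit.{u + 1} where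
  toFun _ := PUnit.unit
  invFun _ := fun i => i.elim0
  map_add' _ _ := Subsingleton.elim _ _
  map_smul' _ _ := Subsingleton.elim _ _
  left_inv f := funext fun i => i.elim0
  right_inv _ := Subsingleton.elim _ _

lemma d_pi (n : ℕ) : dim.d (Fin n → R) ⊤ = n := by
  induction n with
  | zero => rw [d_top_iso dim punitLEquiv, dim.d_zero]; simp
  | succ n ih =>
    rw [d_top_iso dim (finSuccLEquiv n), ← Submodule.prod_top, dim.d_prod, dim.d_ring, ih]
    push_cast
    rw [add_comm]

lemma d_top_ne_top_of_fg (hQ : (⊤ : Submodule R M).FG) : dim.d M ⊤ ≠ ⊤ := by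
  have : Module.Finite R M := Module.finite_def.mpr hQ
  obtain ⟨n, f, hf⟩ := Module.Finite.exists_fin' R M
  rw [← d_top_iso dim (f.quotKerEquivOfSurjective hf)]
  exact ne_top_of_le_ne_top (by rw [d_pi]; exact ENNReal.natCast_ne_top n) (d_quot_le dim _)

lemma d_le_sub {p W : Submodule R M} (hp : p.FG) (hW : W.FG) (h : p ≤ W) :
    dim.d M p ≤ dim.d W (p.comap W.subtype) := by
  rw [dim.continuity_inf M p hp]
  exact iInf_le (fun q : {q : Submodule R M // q.FG ∧ p ≤ q} => dim.d q.1 (p.comap q.1.subtype)) ⟨W, hW, h⟩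

lemma d_le_intrinsic {p : Submodule R M} (hp : p.FG) : dim.d M p ≤ dim.d p ⊤ := by
  have h := d_le_sub dim hp hp le_rfl
  rwa [Submodule.comap_subtype_self] at h

lemma exists_fg_lift (f : M →ₗ[R] N) (S : Submodule R M) (r : Submodule R N)
    (hr : r.FG) (hle : r ≤ S.map f) : ∃ s : Submodule R M, s.FG ∧ s ≤ S ∧ s.map f = r := by
  obtain ⟨T, hT⟩ := hr
  have hmem : ∀ t : (T : Set N), (t : N) ∈ S.map f := fun t =>
    hle (hT ▸ Submodule.subset_span t.2)
  choose g hg1 hg2 using fun t => Submodule.mem_map.mp (hmem t)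
  refine ⟨Submodule.span R (Set.range g), Submodule.fg_span (Set.finite_range g), ?_, ?_⟩
  · rw [Submodule.span_le]; rintro _ ⟨t, rfl⟩; exact hg1 t
  · rw [Submodule.map_span, ← Set.range_comp]
    have : (f ∘ g) = fun t : (T : Set N) => (t : N) := funext fun t => hg2 t
    rw [this, Subtype.range_coe, hT]

lemma fg_top_quot (hQ : (⊤ : Submodule R M).FG) (K : Submodule R M) :
    (⊤ : Submodule R (M ⧸ K)).FG := by
  rw [← Submodule.range_mkQ K, ← Submodule.map_top]
  exact hQ.map _

lemma d_star (hQ : (⊤ : Submodule R M).FG) (S K : Submodule R M) :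
    dim.d (M ⧸ S) ⊤ + dim.d (M ⧸ K) ⊤ ≤ dim.d M ⊤ + dim.d (M ⧸ (S ⊔ K)) ⊤ := by
  set φ : M →ₗ[R] (M ⧸ S) × (M ⧸ K) := S.mkQ.prod K.mkQ with hφ
  have h1 : S ≤ LinearMap.ker (S ⊔ K).mkQ := by rw [Submodule.ker_mkQ]; exact le_sup_left
  have h2 : K ≤ LinearMap.ker (S ⊔ K).mkQ := by rw [Submodule.ker_mkQ]; exact le_sup_right
  set ψ : (M ⧸ S) × (M ⧸ K) →ₗ[R] M ⧸ (S ⊔ K) :=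
    (S.liftQ (S ⊔ K).mkQ h1).coprod (-(K.liftQ (S ⊔ K).mkQ h2)) with hψdef
  have hψ : Function.Surjective ψ := by
    intro z
    obtain ⟨x, rfl⟩ := (S ⊔ K).mkQ_surjective z
    refine ⟨(S.mkQ x, 0), ?_⟩
    simp [hψdef, Submodule.liftQ_apply]
  have hker : LinearMap.ker ψ = LinearMap.range φ := by
    ext z
    obtain ⟨a, b⟩ := z
    obtain ⟨x, rfl⟩ := S.mkQ_surjective a
    obtain ⟨y, rfl⟩ := K.mkQ_surjective b
    simp only [LinearMap.mem_ker, LinearMap.mem_range, LinearMap.coprod_apply,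
      LinearMap.neg_apply, Submodule.mkQ_apply, Submodule.liftQ_apply, hψdef, hφ,
      LinearMap.prod_apply, Function.prod, Prod.mk.injEq]
    rw [← sub_eq_add_neg, ← Submodule.Quotient.mk_sub, Submodule.Quotient.mk_eq_zero]
    constructor
    · intro hxy
      obtain ⟨s, hs, k, hk, hsk⟩ := Submodule.mem_sup.mp hxy
      refine ⟨x - s, ?_, ?_⟩
      · rw [Submodule.Quotient.eq]
        simpa using neg_mem hs
      · rw [Submodule.Quotient.eq]
        have h9 : x - s - y = (x - y) - s := by abel
        rw [h9, ← hsk]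
        simpa using hk
    · rintro ⟨w, hw1, hw2⟩
      have hS : w - x ∈ S := (Submodule.Quotient.eq S).mp hw1
      have hK : w - y ∈ K := (Submodule.Quotient.eq K).mp hw2
      have h9 : x - y = -(w - x) + (w - y) := by abel
      rw [h9]
      exact Submodule.add_mem_sup (neg_mem hS) hK
  have hprod : dim.d ((M ⧸ S) × (M ⧸ K)) ⊤ = dim.d (M ⧸ S) ⊤ + dim.d (M ⧸ K) ⊤ := by
    rw [← Submodule.prod_top, dim.d_prod]
  have hZfg : (LinearMap.range φ).FG := by
    rw [← Submodule.map_top]; exact hQ.map φ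
  have hA : dim.d ((M ⧸ S) × (M ⧸ K)) (LinearMap.range φ) ≤ dim.d M ⊤ := by
    refine le_trans (d_le_intrinsic dim hZfg) ?_
    rw [← d_top_iso dim φ.quotKerEquivRange]
    exact d_quot_le dim _
  have hB : dim.d (((M ⧸ S) × (M ⧸ K)) ⧸ (LinearMap.range φ)) ⊤ = dim.d (M ⧸ (S ⊔ K)) ⊤ := by
    rw [← hker]
    exact d_top_iso dim (ψ.quotKerEquivOfSurjective hψ)
  calc dim.d (M ⧸ S) ⊤ + dim.d (M ⧸ K) ⊤ = dim.d ((M ⧸ S) × (M ⧸ K)) ⊤ := hprod.symm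
    _ = dim.d _ (LinearMap.range φ) + dim.d (((M ⧸ S) × (M ⧸ K)) ⧸ (LinearMap.range φ)) ⊤ :=
        dim.additivity _ _
    _ ≤ dim.d M ⊤ + dim.d (M ⧸ (S ⊔ K)) ⊤ := add_le_add hA (le_of_eq hB)

lemma d_mkQ_le (hQ : (⊤ : Submodule R M).FG) (K S : Submodule R M) :
    dim.d (M ⧸ K) (S.map K.mkQ) ≤ dim.d M S := by
  have hmap : S.map K.mkQ = (S ⊔ K).map K.mkQ := by
    rw [Submodule.map_sup, Submodule.mkQ_map_self, sup_bot_eq]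
  have h2 : dim.d ((M ⧸ K) ⧸ (S.map K.mkQ)) ⊤ = dim.d (M ⧸ (S ⊔ K)) ⊤ := by
    rw [hmap]
    exact d_top_iso dim (Submodule.quotientQuotientEquivQuotient K (S ⊔ K) le_sup_right)
  have e1 := dim.additivity (M ⧸ K) (S.map K.mkQ)
  have e3 := dim.additivity M S
  have hstar := d_star dim hQ S K
  have hc1 : dim.d (M ⧸ (S ⊔ K)) ⊤ ≠ ⊤ := d_top_ne_top_of_fg dim (fg_top_quot hQ _)
  have hc2 : dim.d (M ⧸ S) ⊤ ≠ ⊤ := d_top_ne_top_of_fg dim (fg_top_quot hQ _)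
  rw [e1, h2] at hstar
  rw [e3] at hstar
  -- hstar : d (M/S) T + (a + c1) <= (d M S + d (M/S) T) + c1
  have h4 : (dim.d (M ⧸ K) (S.map K.mkQ) + dim.d (M ⧸ S) ⊤) + dim.d (M ⧸ (S ⊔ K)) ⊤ ≤
      (dim.d M S + dim.d (M ⧸ S) ⊤) + dim.d (M ⧸ (S ⊔ K)) ⊤ := by
    calc (dim.d (M ⧸ K) (S.map K.mkQ) + dim.d (M ⧸ S) ⊤) + dim.d (M ⧸ (S ⊔ K)) ⊤
        = dim.d (M ⧸ S) ⊤ + (dim.d (M ⧸ K) (S.map K.mkQ) + dim.d (M ⧸ (S ⊔ K)) ⊤) := by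
          rw [add_comm (dim.d (M ⧸ K) (S.map K.mkQ)) (dim.d (M ⧸ S) ⊤), add_assoc]
      _ ≤ (dim.d M S + dim.d (M ⧸ S) ⊤) + dim.d (M ⧸ (S ⊔ K)) ⊤ := hstar
  have h5 := (ENNReal.add_le_add_iff_right hc1).mp h4
  rw [add_comm (dim.d (M ⧸ K) (S.map K.mkQ)) (dim.d (M ⧸ S) ⊤),
    add_comm (dim.d M S) (dim.d (M ⧸ S) ⊤)] at h5
  exact (ENNReal.add_le_add_iff_left hc2).mp h5

lemma d_step1 (hQ : (⊤ : Submodule R M).FG) {A B : Submodule R M} (hAB : A ≤ B) :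
    dim.d M B = dim.d M A + dim.d (M ⧸ A) (B.map A.mkQ) := by
  have e1 := dim.additivity M B
  have e2 := dim.additivity M A
  have e3 := dim.additivity (M ⧸ A) (B.map A.mkQ)
  have h4 : dim.d ((M ⧸ A) ⧸ (B.map A.mkQ)) ⊤ = dim.d (M ⧸ B) ⊤ :=
    d_top_iso dim (Submodule.quotientQuotientEquivQuotient A B hAB)
  have hcB : dim.d (M ⧸ B) ⊤ ≠ ⊤ := d_top_ne_top_of_fg dim (fg_top_quot hQ _)
  have key : dim.d M B + dim.d (M ⧸ B) ⊤ =
      (dim.d M A + dim.d (M ⧸ A) (B.map A.mkQ)) + dim.d (M ⧸ B) ⊤ := by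
    rw [← e1, e2, e3, h4, add_assoc]
  exact (ENNReal.add_left_inj hcB).mp key

lemma d_quot_map (φ : M →ₗ[R] N) (S : Submodule R M) {W : Submodule R N}
    (hW : LinearMap.range φ = W) :
    dim.d (M ⧸ LinearMap.ker φ) (S.map (LinearMap.ker φ).mkQ) =
      dim.d W ((S.map φ).comap W.subtype) := by
  have key : ∀ x : M,
      (((φ.quotKerEquivRange.trans (LinearEquiv.ofEq _ _ hW)) (Submodule.Quotient.mk x) : W) : N)
        = φ x := by
    intro x
    rw [LinearEquiv.trans_apply, LinearEquiv.coe_ofEq_apply,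
      LinearMap.quotKerEquivRange_apply_mk]
  rw [dim.iso_invariant _ _ (φ.quotKerEquivRange.trans (LinearEquiv.ofEq _ _ hW))]
  congr 1
  ext y
  simp only [Submodule.mem_map, Submodule.mem_comap, LinearEquiv.coe_coe]
  constructor
  · rintro ⟨z, ⟨x, hxS, rfl⟩, rfl⟩
    refine ⟨x, hxS, ?_⟩
    rw [Submodule.mkQ_apply]
    exact (key x).symm
  · rintro ⟨x, hxS, hx⟩
    refine ⟨(LinearMap.ker φ).mkQ x, Submodule.mem_map_of_mem hxS, ?_⟩
    apply Subtype.ext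
    rw [Submodule.mkQ_apply]
    rw [key x]
    exact hx

lemma d_map_le_fg (f : M →ₗ[R] N) {S : Submodule R M} (hS : S.FG) :
    dim.d N (S.map f) ≤ dim.d M S := by
  rw [dim.continuity_inf M S hS]
  refine le_iInf fun q => ?_
  obtain ⟨q, hqfg, hSq⟩ := q
  set φ : ↥q →ₗ[R] N := f.comp q.subtype with hφdef
  have hrange : LinearMap.range φ = q.map f := by
    rw [hφdef, LinearMap.range_comp, Submodule.range_subtype]
  have hSq' : (S.comap q.subtype).map φ = S.map f := by
    rw [hφdef, Submodule.map_comp, Submodule.map_comap_subtype, inf_of_le_right hSq]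
  calc dim.d N (S.map f) ≤ dim.d (q.map f) ((S.map f).comap (q.map f).subtype) :=
        d_le_sub dim (hS.map f) (hqfg.map f) (Submodule.map_mono hSq)
    _ = dim.d (↥q ⧸ LinearMap.ker φ) ((S.comap q.subtype).map (LinearMap.ker φ).mkQ) := by
        rw [← hSq']
        exact (d_quot_map dim φ (S.comap q.subtype) hrange).symm
    _ ≤ dim.d q (S.comap q.subtype) :=
        d_mkQ_le dim ((Submodule.fg_top q).mpr hqfg) _ _

lemma d_map_le (f : M →ₗ[R] N) (S : Submodule R M) : dim.d N (S.map f) ≤ dim.d M S := by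
  rw [dim.continuity_sup N (S.map f)]
  refine iSup_le fun r => ?_
  obtain ⟨r, hrfg, hrle⟩ := r
  obtain ⟨s, hsfg, hsS, hsr⟩ := exists_fg_lift f S r hrfg hrle
  calc dim.d N r = dim.d N (s.map f) := by rw [hsr]
    _ ≤ dim.d M s := d_map_le_fg dim f hsfg
    _ ≤ dim.d M S := d_mono dim hsS

lemma exists_fg_lift_ge (f : M →ₗ[R] N) (hf : Function.Surjective f)
    {r : Submodule R N} (hr : r.FG) {p : Submodule R M} (hp : p.FG) (hpr : p.map f ≤ r) :
    ∃ q : Submodule R M, q.FG ∧ p ≤ q ∧ q.map f = r := by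
  obtain ⟨s, hsfg, -, hsm⟩ := exists_fg_lift f ⊤ r hr
    (by rw [Submodule.map_top, LinearMap.range_eq_top.mpr hf]; exact le_top)
  exact ⟨s ⊔ p, hsfg.sup hp, le_sup_right,
    by rw [Submodule.map_sup, hsm, sup_eq_left.mpr hpr]⟩

lemma incl_map_eq {A B C : Submodule R M} (hBC : B ≤ C) (hAB : A ≤ B) :
    (A.comap B.subtype).map (Submodule.inclusion hBC) = A.comap C.subtype := by
  ext x
  simp only [Submodule.mem_map, Submodule.mem_comap]
  constructor
  · rintro ⟨y, hy, rfl⟩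
    exact hy
  · intro hx
    exact ⟨⟨(x : M), hAB hx⟩, hx, rfl⟩

lemma d_claimC {p K : Submodule R M} (hp : p.FG) (hK : K.FG) :
    dim.d M p ≤ dim.d M K + dim.d (M ⧸ K) (p.map K.mkQ) := by
  rw [dim.continuity_inf M K hK, dim.continuity_inf (M ⧸ K) (p.map K.mkQ) (hp.map _),
    ENNReal.iInf_add]
  refine le_iInf fun i => ?_
  rw [ENNReal.add_iInf]
  refine le_iInf fun j => ?_
  obtain ⟨q₁, hq₁fg, hKq₁⟩ := i
  obtain ⟨qb, hqbfg, hpqb⟩ := j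
  obtain ⟨q₂, hq₂fg, hpq₂, hq₂m⟩ :=
    exists_fg_lift_ge K.mkQ K.mkQ_surjective hqbfg hp hpqb
  set q := q₁ ⊔ q₂ with hqdef
  have hqfg : q.FG := hq₁fg.sup hq₂fg
  have hpq : p ≤ q := hpq₂.trans le_sup_right
  have hKq : K ≤ q := hKq₁.trans le_sup_left
  set φ : ↥q →ₗ[R] M ⧸ K := K.mkQ.comp q.subtype with hφdef
  have hrange : LinearMap.range φ = q.map K.mkQ := by
    rw [hφdef, LinearMap.range_comp, Submodule.range_subtype]
  set P := p.comap q.subtype with hPdef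
  set KQ := LinearMap.ker φ with hKQdef
  have h0 : dim.d M p ≤ dim.d q P := by
    have hPm : P.map q.subtype = p := by
      rw [hPdef, Submodule.map_comap_subtype, inf_of_le_right hpq]
    calc dim.d M p = dim.d M (P.map q.subtype) := by rw [hPm]
      _ ≤ dim.d q P := d_map_le dim _ _
  have h2 : dim.d q (P ⊔ KQ) = dim.d q KQ + dim.d (↥q ⧸ KQ) ((P ⊔ KQ).map KQ.mkQ) :=
    d_step1 dim ((Submodule.fg_top q).mpr hqfg) le_sup_right
  have h3 : (P ⊔ KQ).map KQ.mkQ = P.map KQ.mkQ := by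
    rw [Submodule.map_sup, Submodule.mkQ_map_self, sup_bot_eq]
  have hKQ2 : KQ = (K.comap q₁.subtype).map (Submodule.inclusion (le_sup_left : q₁ ≤ q)) := by
    rw [incl_map_eq (le_sup_left : q₁ ≤ q) hKq₁]
    ext x
    simp only [hKQdef, hφdef, LinearMap.mem_ker, LinearMap.comp_apply,
      Submodule.subtype_apply, Submodule.mkQ_apply, Submodule.Quotient.mk_eq_zero,
      Submodule.mem_comap]
  have hT1 : dim.d q KQ ≤ dim.d q₁ (K.comap q₁.subtype) := by
    rw [hKQ2]
    exact d_map_le dim _ _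
  have hT2 : dim.d (↥q ⧸ KQ) (P.map KQ.mkQ) ≤ dim.d qb ((p.map K.mkQ).comap qb.subtype) := by
    have hPφ : P.map φ = p.map K.mkQ := by
      rw [hφdef, Submodule.map_comp, hPdef, Submodule.map_comap_subtype, inf_of_le_right hpq]
    have hq1 : dim.d (↥q ⧸ KQ) (P.map KQ.mkQ)
        = dim.d (q.map K.mkQ) ((p.map K.mkQ).comap (q.map K.mkQ).subtype) := by
      rw [hKQdef, d_quot_map dim φ P hrange, hPφ]
    rw [hq1]
    have hqbW : qb ≤ q.map K.mkQ := by
      rw [← hq₂m]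
      exact Submodule.map_mono le_sup_right
    rw [← incl_map_eq hqbW hpqb]
    exact d_map_le dim _ _
  calc dim.d M p ≤ dim.d q P := h0
    _ ≤ dim.d q (P ⊔ KQ) := d_mono dim le_sup_left
    _ = dim.d q KQ + dim.d (↥q ⧸ KQ) (P.map KQ.mkQ) := by rw [h2, h3]
    _ ≤ dim.d q₁ (K.comap q₁.subtype) + dim.d qb ((p.map K.mkQ).comap qb.subtype) :=
        add_le_add hT1 hT2

lemma map_mkQ_eq_bot {p K : Submodule R M} (h : p ≤ K) : p.map K.mkQ = ⊥ := by
  rw [eq_bot_iff]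
  rintro x ⟨y, hy, rfl⟩
  simp only [Submodule.mkQ_apply, Submodule.mem_bot, Submodule.Quotient.mk_eq_zero]
  exact h hy

lemma ge_dir {N₁ N₂ : Submodule R M} (h : N₁ ≤ N₂) :
    dim.d M N₁ + dim.d (M ⧸ N₁) (N₂.map N₁.mkQ) ≤ dim.d M N₂ := by
  rw [dim.continuity_sup M N₁, dim.continuity_sup (M ⧸ N₁) (N₂.map N₁.mkQ)]
  haveI : Nonempty {p' : Submodule R M // p'.FG ∧ p' ≤ N₁} := ⟨⟨⊥, Submodule.fg_bot, bot_le⟩⟩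
  haveI : Nonempty {p' : Submodule R (M ⧸ N₁) // p'.FG ∧ p' ≤ N₂.map N₁.mkQ} :=
    ⟨⟨⊥, Submodule.fg_bot, bot_le⟩⟩
  refine ENNReal.iSup_add_iSup_le fun i j => ?_
  obtain ⟨p₁, hp₁fg, hp₁⟩ := i
  obtain ⟨pb, hpbfg, hpb⟩ := j
  obtain ⟨p₂, hp₂fg, hp₂N, hp₂m⟩ := exists_fg_lift N₁.mkQ N₂ pb hpbfg hpb
  set p := p₁ ⊔ p₂ with hpdef
  have hpfg : p.FG := hp₁fg.sup hp₂fg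
  have hpN₂ : p ≤ N₂ := sup_le (hp₁.trans h) hp₂N
  refine le_trans ?_ (d_mono dim hpN₂)
  rw [dim.continuity_inf M p hpfg]
  refine le_iInf fun k => ?_
  obtain ⟨q, hqfg, hpq⟩ := k
  set P₁ := p₁.comap q.subtype with hP₁def
  set P := p.comap q.subtype with hPdef
  have hP₁P : P₁ ≤ P := Submodule.comap_mono le_sup_left
  have hstep := d_step1 dim ((Submodule.fg_top q).mpr hqfg) hP₁P
  have hT1 : dim.d M p₁ ≤ dim.d q P₁ := by
    rw [dim.continuity_inf M p₁ hp₁fg]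
    exact iInf_le (fun k : {k : Submodule R M // k.FG ∧ p₁ ≤ k} =>
      dim.d k.1 (p₁.comap k.1.subtype)) ⟨q, hqfg, le_sup_left.trans hpq⟩
  have hφker : P₁ ≤ LinearMap.ker (N₁.mkQ.comp q.subtype) := by
    intro x hx
    simp only [LinearMap.mem_ker, LinearMap.comp_apply, Submodule.subtype_apply,
      Submodule.mkQ_apply, Submodule.Quotient.mk_eq_zero]
    exact hp₁ hx
  set g := P₁.liftQ (N₁.mkQ.comp q.subtype) hφker with hgdef
  have himg : (P.map P₁.mkQ).map g = pb := by
    rw [← Submodule.map_comp, hgdef, Submodule.liftQ_mkQ, Submodule.map_comp,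
      hPdef, Submodule.map_comap_subtype, inf_of_le_right hpq, hpdef, Submodule.map_sup,
      hp₂m, map_mkQ_eq_bot hp₁, bot_sup_eq]
  have hT2 : dim.d (M ⧸ N₁) pb ≤ dim.d (↥q ⧸ P₁) (P.map P₁.mkQ) := by
    calc dim.d (M ⧸ N₁) pb = dim.d (M ⧸ N₁) ((P.map P₁.mkQ).map g) := by rw [himg]
      _ ≤ dim.d (↥q ⧸ P₁) (P.map P₁.mkQ) := d_map_le dim _ _
  calc dim.d M p₁ + dim.d (M ⧸ N₁) pb ≤
      dim.d q P₁ + dim.d (↥q ⧸ P₁) (P.map P₁.mkQ) := add_le_add hT1 hT2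
    _ = dim.d q P := hstep.symm

lemma exists_near_sup {ι : Sort*} [Nonempty ι] {f : ι → ℝ≥0∞} {a : ℝ≥0∞}
    (ha : a = ⨆ i, f i) (hfin : a ≠ ⊤) {ε : ℝ≥0∞} (hε : ε ≠ 0) : ∃ i, a ≤ f i + ε := by
  by_cases hle : a ≤ ε
  · exact ⟨Classical.arbitrary ι, hle.trans le_add_self⟩
  · have ha0 : a ≠ 0 := fun h0 => hle (h0 ▸ (zero_le : (0 : ℝ≥0∞) ≤ ε))
    have hlt : a - ε < a := ENNReal.sub_lt_self hfin ha0 hε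
    obtain ⟨i, hi⟩ := lt_iSup_iff.mp (lt_of_lt_of_eq hlt ha)
    exact ⟨i, tsub_le_iff_right.mp hi.le⟩

lemma le_dir (N₁ N₂ : Submodule R M) (h : N₁ ≤ N₂) :
    dim.d M N₂ ≤ dim.d M N₁ + dim.d (M ⧸ N₁) (N₂.map N₁.mkQ) := by
  rw [dim.continuity_sup M N₂]
  refine iSup_le fun i => ?_
  obtain ⟨p, hpfg, hpN₂⟩ := i
  have hpble : p.map N₁.mkQ ≤ N₂.map N₁.mkQ := Submodule.map_mono hpN₂
  refine le_trans ?_ (add_le_add_right (d_mono dim hpble) _)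
  -- goal : d M p ≤ d M N₁ + d (M ⧸ N₁) (p.map N₁.mkQ)
  rw [dim.continuity_inf (M ⧸ N₁) (p.map N₁.mkQ) (hpfg.map _), ENNReal.add_iInf]
  refine le_iInf fun j => ?_
  obtain ⟨qb, hqbfg, hpqb⟩ := j
  refine ENNReal.le_of_forall_pos_le_add fun ε hε _ => ?_
  have hεne : (ε : ℝ≥0∞) ≠ 0 := ENNReal.coe_ne_zero.mpr hε.ne'
  obtain ⟨q₀, hq₀fg, hpq₀, hq₀m⟩ :=
    exists_fg_lift_ge N₁.mkQ N₁.mkQ_surjective hqbfg hpfg hpqb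
  have hq₀top : (⊤ : Submodule R ↥q₀).FG := (Submodule.fg_top q₀).mpr hq₀fg
  have hfin : dim.d q₀ ⊤ ≠ ⊤ := d_top_ne_top_of_fg dim hq₀top
  set φ : ↥q₀ →ₗ[R] M ⧸ N₁ := N₁.mkQ.comp q₀.subtype with hφdef
  set B := LinearMap.ker φ with hBdef
  set P := p.comap q₀.subtype with hPdef
  have hrangeφ : LinearMap.range φ = qb := by
    rw [hφdef, LinearMap.range_comp, Submodule.range_subtype, hq₀m]
  have hPφ : P.map φ = p.map N₁.mkQ := by
    rw [hφdef, Submodule.map_comp, hPdef, Submodule.map_comap_subtype,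
      inf_of_le_right hpq₀]
  set T := dim.d qb ((p.map N₁.mkQ).comap qb.subtype) with hTdef
  have hE : dim.d q₀ (P ⊔ B) = dim.d q₀ B + T := by
    rw [d_step1 dim hq₀top (le_sup_right : B ≤ P ⊔ B)]
    congr 1
    rw [Submodule.map_sup, Submodule.mkQ_map_self, sup_bot_eq, hBdef,
      d_quot_map dim φ P hrangeφ, hPφ]
  have hGBfin : dim.d q₀ B ≠ ⊤ := ne_top_of_le_ne_top hfin (d_mono dim le_top)
  haveI : Nonempty {b : Submodule R ↥q₀ // b.FG ∧ b ≤ B} := ⟨⟨⊥, Submodule.fg_bot, bot_le⟩⟩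
  obtain ⟨⟨b, hbfg, hbB⟩, hGb⟩ :=
    exists_near_sup (dim.continuity_sup ↥q₀ B) hGBfin hεne
  -- the finitely generated approximation of N₁
  set n := b.map q₀.subtype with hndef
  have hnfg : n.FG := hbfg.map _
  have hnN₁ : n ≤ N₁ := by
    rintro x ⟨y, hy, rfl⟩
    have := hbB hy
    simpa only [hBdef, hφdef, LinearMap.mem_ker, LinearMap.comp_apply,
      Submodule.subtype_apply, Submodule.mkQ_apply, Submodule.Quotient.mk_eq_zero]
      using this
  set φb : ↥q₀ →ₗ[R] M ⧸ n := n.mkQ.comp q₀.subtype with hφbdef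
  have hkerb : LinearMap.ker φb = b := by
    ext x
    simp only [hφbdef, LinearMap.mem_ker, LinearMap.comp_apply, Submodule.subtype_apply,
      Submodule.mkQ_apply, Submodule.Quotient.mk_eq_zero, hndef]
    constructor
    · rintro ⟨y, hy, hxy⟩
      have : y = x := Subtype.val_injective hxy
      exact this ▸ hy
    · intro hx
      exact ⟨x, hx, rfl⟩
  have hrangeb : LinearMap.range φb = q₀.map n.mkQ := by
    rw [hφbdef, LinearMap.range_comp, Submodule.range_subtype]
  have hPφb : P.map φb = p.map n.mkQ := by
    rw [hφbdef, Submodule.map_comp, hPdef, Submodule.map_comap_subtype,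
      inf_of_le_right hpq₀]
  set tb := dim.d (↥q₀ ⧸ LinearMap.ker φb) (P.map (LinearMap.ker φb).mkQ) with htbdef
  have hEb : dim.d q₀ (P ⊔ LinearMap.ker φb) = dim.d q₀ (LinearMap.ker φb) + tb := by
    rw [d_step1 dim hq₀top (le_sup_right : LinearMap.ker φb ≤ P ⊔ LinearMap.ker φb)]
    congr 1
    rw [Submodule.map_sup, Submodule.mkQ_map_self, sup_bot_eq]
  have hMn : dim.d (M ⧸ n) (p.map n.mkQ) ≤ tb := by
    have h1 := d_le_sub dim (hpfg.map n.mkQ) (hq₀fg.map n.mkQ)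
      (Submodule.map_mono hpq₀ : p.map n.mkQ ≤ q₀.map n.mkQ)
    have h2 : tb = dim.d (q₀.map n.mkQ) ((p.map n.mkQ).comap (q₀.map n.mkQ).subtype) := by
      rw [htbdef, d_quot_map dim φb P hrangeb, hPφb]
    rw [h2]
    exact h1
  -- cancel to get tb ≤ T + ε
  have hbfin : dim.d q₀ (LinearMap.ker φb) ≠ ⊤ := ne_top_of_le_ne_top hfin (d_mono dim le_top)
  have hchain : dim.d q₀ (LinearMap.ker φb) + tb ≤ dim.d q₀ (LinearMap.ker φb) + (T + ε) := by
    calc dim.d q₀ (LinearMap.ker φb) + tb = dim.d q₀ (P ⊔ LinearMap.ker φb) := hEb.symm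
      _ ≤ dim.d q₀ (P ⊔ B) := d_mono dim (sup_le_sup_left (hkerb ▸ hbB) P)
      _ = dim.d q₀ B + T := hE
      _ ≤ (dim.d q₀ b + ε) + T := add_le_add_left hGb T
      _ = dim.d q₀ (LinearMap.ker φb) + (T + ε) := by
          rw [hkerb, add_assoc, add_comm (ε : ℝ≥0∞) T]
  have htbT : tb ≤ T + ε := (ENNReal.add_le_add_iff_left hbfin).mp hchain
  calc dim.d M p ≤ dim.d M n + dim.d (M ⧸ n) (p.map n.mkQ) := d_claimC dim hpfg hnfg
    _ ≤ dim.d M N₁ + tb := add_le_add (d_mono dim hnN₁) hMn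
    _ ≤ dim.d M N₁ + (T + ε) := add_le_add_right htbT _
    _ = (dim.d M N₁ + T) + ε := by rw [add_assoc]

end Hidden

/-- full additivity. For a bivariant Sylvester module rank function
`dim(·|·)` for `R` and submodules `N₁ ⊆ N₂` of an `R`-module `M`,
`dim(N₂|M) = dim(N₁|M) + dim(N₂/N₁ | M/N₁)`. -/
theorem bivariantSylvesterRank_additivity (R : Type u) [Ring R]
    (dim : BivariantSylvesterRank R)
    (M : Type u) [AddCommGroup M] [Module R M]
    (N₁ N₂ : Submodule R M) (h : N₁ ≤ N₂) :
    dim.d M N₂ = dim.d M N₁ + dim.d (M ⧸ N₁) (N₂.map N₁.mkQ) := by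
  exact le_antisymm (Hidden.le_dir dim N₁ N₂ h) (Hidden.ge_dir dim h)
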